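/- Let X be a metric space, φ : ℝ × X → X a continuous flow on X, and F : X → ℝ a continuous function with F ≥ 0. Let x ∈ X be such that the function t ↦ F(φ(t,x)) is integrable on [0,∞), i.e. ∫₀^∞ F(φ(t,x)) dt < ∞. Then F(y) = 0 for every point y of the ω-limit set of x. -/

import Mathlib

open MeasureTheory Set

/-- If `F ≥ 0` is continuous and `t ↦ F(φ(t,x))` is integrable on `[0,∞)` for a
continuous flow `φ` on a metric space, then `F` vanishes on the ω-limit set of `x`. -/
theorem omega_limit_subset_zero_set_of_integrable
    {X : Type*} [MetricSpace X]
    (φ : ℝ × X → X) (hφ : Continuous φ)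
    (hφ0 : ∀ x : X, φ (0, x) = x)
    (hφadd : ∀ (s t : ℝ) (x : X), φ (s, φ (t, x)) = φ (s + t, x))
    (F : X → ℝ) (hF : Continuous F) (hF0 : ∀ z : X, 0 ≤ F z)
    (x : X)
    (hint : IntegrableOn (fun t : ℝ => F (φ (t, x))) (Ici (0 : ℝ)))
    (y : X)
    (hy : y ∈ ⋂ T ∈ Ici (0 : ℝ), closure {z : X | ∃ t : ℝ, T ≤ t ∧ z = φ (t, x)}) :
    F y = 0 := by
  by_contra hne
  set c := F y with hc
  have hcpos : 0 < c := lt_of_le_of_ne (hF0 y) (Ne.symm hne)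
  set f : ℝ → ℝ := fun t => F (φ (t, x)) with hf
  -- continuity of (s, z) ↦ F (φ (s, z)) at (0, y)
  have hg : Continuous fun p : ℝ × X => F (φ p) := hF.comp hφ
  have hgy : F (φ (0, y)) = c := by rw [hφ0]
  have hcont := hg.continuousAt (x := ((0 : ℝ), y))
  rw [Metric.continuousAt_iff] at hcont
  obtain ⟨δ, hδpos, hδ⟩ := hcont (c / 2) (by positivity)
  -- key local estimate
  have key : ∀ t₀ : ℝ, dist (φ (t₀, x)) y < δ →
      ∀ t ∈ Icc t₀ (t₀ + δ / 2), c / 2 ≤ f t := by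
    intro t₀ ht₀ t ht
    have h1 : φ (t, x) = φ (t - t₀, φ (t₀, x)) := by
      rw [hφadd]; ring_nf
    have hd : dist ((t - t₀, φ (t₀, x)) : ℝ × X) ((0 : ℝ), y) < δ := by
      rw [Prod.dist_eq]
      simp only [Real.dist_eq, sub_zero]
      apply max_lt
      · rw [abs_of_nonneg (by linarith [ht.1])]
        linarith [ht.2]
      · exact ht₀
    have := hδ hd
    rw [hgy, Real.dist_eq, abs_lt] at this
    have : c - c / 2 < F (φ (t - t₀, φ (t₀, x))) := by linarith [this.1]
    rw [hf]; simp only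
    rw [h1]; linarith
  -- integrability facts
  have hint' : IntegrableOn f (Ioi (0 : ℝ)) := hint.mono_set Ioi_subset_Ici_self
  set I := ∫ t in Ioi (0 : ℝ), f t with hI
  set b := c / 2 * (δ / 2) with hb
  have hbpos : 0 < b := by positivity
  -- tail integrals tend to 0; pick T
  have htend : Filter.Tendsto (fun T : ℝ => ∫ t in (0:ℝ)..T, f t)
      Filter.atTop (nhds I) :=
    intervalIntegral_tendsto_integral_Ioi 0 hint' Filter.tendsto_id
  have : ∀ᶠ T in Filter.atTop, I - b < ∫ t in (0:ℝ)..T, f t :=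
    htend.eventually (eventually_gt_nhds (by linarith))
  obtain ⟨T, hT, hT0⟩ := (this.and (Filter.eventually_ge_atTop (0:ℝ))).exists
  -- tail bound: ∫ over Ioi T is < b
  have hsplit : (∫ t in Ioc (0:ℝ) T, f t) + ∫ t in Ioi T, f t = I := by
    rw [hI, ← setIntegral_union (Ioc_disjoint_Ioi le_rfl) measurableSet_Ioi
        (hint'.mono_set Ioc_subset_Ioi_self) (hint'.mono_set (Ioi_subset_Ioi hT0)),
      Ioc_union_Ioi_eq_Ioi hT0]
  have hIoc : (∫ t in (0:ℝ)..T, f t) = ∫ t in Ioc (0:ℝ) T, f t :=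
    intervalIntegral.integral_of_le hT0
  have htail : (∫ t in Ioi T, f t) < b := by
    rw [hIoc] at hT; linarith
  -- use ω-limit membership at time T + 1
  simp only [mem_iInter] at hy
  have hyT := hy (T + 1) (by simp; linarith)
  rw [Metric.mem_closure_iff] at hyT
  obtain ⟨z, hz, hzd⟩ := hyT δ hδpos
  obtain ⟨t₀, ht₀T, rfl⟩ := hz
  rw [dist_comm] at hzd
  -- lower bound the tail integral
  have hsub : Icc t₀ (t₀ + δ / 2) ⊆ Ioi T := fun t ht => by
    simp only [mem_Ioi]; have := ht.1; linarith
  have hmeas : MeasurableSet (Icc t₀ (t₀ + δ / 2)) := measurableSet_Icc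
  have hintIcc : IntegrableOn f (Icc t₀ (t₀ + δ / 2)) :=
    hint.mono_set fun t ht => by
      simp only [mem_Ici]; have := ht.1; linarith
  have hlow : b ≤ ∫ t in Icc t₀ (t₀ + δ / 2), f t := by
    have := setIntegral_ge_of_const_le (μ := volume) hmeas
      (by simp [Real.volume_Icc]) (key t₀ hzd) hintIcc
    rw [measureReal_def, Real.volume_Icc] at this
    have hv : (ENNReal.ofReal (t₀ + δ / 2 - t₀)).toReal = δ / 2 := by
      rw [ENNReal.toReal_ofReal (by linarith)]; ring
    rw [hv, smul_eq_mul] at this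
    linarith [this]
  have hmono : (∫ t in Icc t₀ (t₀ + δ / 2), f t) ≤ ∫ t in Ioi T, f t :=
    setIntegral_mono_set (hint'.mono_set (Ioi_subset_Ioi hT0))
      (Filter.Eventually.of_forall fun t => hF0 _)
      (Filter.Eventually.of_forall hsub)
  linarith
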